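/- Consider the kernel construction: given an (x,y)-ordered sequence of detours D₁ ≺ D₂ ≺ ... ≺ D_t (paths with designated start x_i and end y_i), where at step i the prefix D_i[x_i, w_i] is added, w_i being the first vertex of D_i lying in the already-built graph K^{i−1} = ⋃_{j<i} D_j[x_j, w_j] (with w₁ = y₁). If all detours end at the same vertex y' (y-interleaved family) and any two detours agree on the subpath between any two common vertices, then the number of maximal path-segments (regions) of the final kernel K between consecutive branch/end-points is at most 2t. -/

import Mathlib

open SimpleGraph
set_option linter.unusedSectionVars false
namespace KernelAux

variable {V : Type*} [DecidableEq V] {G : SimpleGraph V}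

/-- Consecutive support entries of a walk form an edge of the walk. -/
lemma edge_getD_mem {u v : V} (p : G.Walk u v) (d : V) :
    ∀ j, j + 1 < p.support.length →
      s(p.support.getD j d, p.support.getD (j+1) d) ∈ p.edges := by
  induction p with
  | nil => intro j hj; simp at hj
  | @cons a b c h q ih =>
    intro j hj
    cases j with
    | zero =>
      rw [Walk.support_cons, q.support_eq_cons]
      simp [Walk.edges_cons]
    | succ n =>
      rw [Walk.support_cons]
      simp only [List.getD_cons_succ]
      rw [Walk.edges_cons]
      refine List.mem_cons_of_mem _ (ih n ?_)
      rw [Walk.support_cons, List.length_cons] at hj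
      omega

/-- Every edge of a walk joins consecutive support entries. -/
lemma edge_eq_getD {u v : V} (p : G.Walk u v) (d : V) {e : Sym2 V} (he : e ∈ p.edges) :
    ∃ j, j + 1 < p.support.length ∧
      e = s(p.support.getD j d, p.support.getD (j+1) d) := by
  induction p with
  | nil => simp at he
  | @cons a b c h q ih =>
    rw [Walk.edges_cons] at he
    rcases List.mem_cons.mp he with rfl | he'
    · refine ⟨0, ?_, ?_⟩
      · rw [Walk.support_cons, List.length_cons]
        have h0 : 0 < q.support.length := by rw [Walk.length_support]; omega
        omega
      · rw [Walk.support_cons, q.support_eq_cons]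
        simp
    · obtain ⟨j, hj, hje⟩ := ih he'
      refine ⟨j + 1, ?_, ?_⟩
      · rw [Walk.support_cons, List.length_cons]; omega
      · rw [Walk.support_cons]; simpa using hje

/-- In a walk of positive length, every support vertex lies on some edge. -/
lemma mem_edge_of_mem_support {u v : V} (p : G.Walk u v) (hlen : 0 < p.length) :
    ∀ z ∈ p.support, ∃ e ∈ p.edges, z ∈ e := by
  induction p with
  | nil => simp at hlen
  | @cons a b c h q ih =>
    intro z hz
    rw [Walk.support_cons, List.mem_cons] at hz
    rcases hz with rfl | hz
    · exact ⟨s(z, b), by rw [Walk.edges_cons]; exact List.mem_cons_self, by simp⟩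
    · cases q with
      | nil =>
        simp only [Walk.support_nil, List.mem_singleton] at hz
        subst hz
        exact ⟨s(a, z), by rw [Walk.edges_cons]; exact List.mem_cons_self, by simp⟩
      | cons h' q' =>
        obtain ⟨e, he, hze⟩ := ih (by simp) z hz
        exact ⟨e, by rw [Walk.edges_cons]; exact List.mem_cons_of_mem _ he, hze⟩

lemma mem_support_of_mem_edge {u v z : V} (p : G.Walk u v) {e : Sym2 V} (he : e ∈ p.edges)
    (hz : z ∈ e) : z ∈ p.support := by
  induction e with
  | h a b =>
    rcases Sym2.mem_iff.mp hz with rfl | rfl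
    · exact p.fst_mem_support_of_mem_edges he
    · exact p.snd_mem_support_of_mem_edges he

/-- A ±1 walk on ℕ which is injective is monotone (dichotomy form). -/
lemma steps_dichotomy (f : ℕ → ℕ) :
    ∀ m : ℕ, (∀ j < m, f (j+1) = f j + 1 ∨ f j = f (j+1) + 1) →
      (∀ j ≤ m, ∀ k ≤ m, f j = f k → j = k) →
      (∀ j < m, f (j+1) = f j + 1) ∨ (∀ j < m, f j = f (j+1) + 1) := by
  intro m
  induction m with
  | zero => intro _ _; left; intro j hj; omega
  | succ n ih =>
    intro hstep hinj
    rcases ih (fun j hj => hstep j (by omega)) (fun j hj k hk => hinj j (by omega) k (by omega))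
      with hup | hdown
    · rcases hstep n (by omega) with hlast | hlast
      · left
        intro j hj
        rcases Nat.lt_or_ge j n with hcase | hcase
        · exact hup j hcase
        · have hjn : j = n := by omega
          subst hjn; exact hlast
      · cases n with
        | zero =>
          right
          intro j hj
          have hj0 : j = 0 := by omega
          subst hj0; exact hlast
        | succ n' =>
          exfalso
          have hstepup := hup n' (by omega)
          have h2 : f n' = f (n' + 1 + 1) := by omega
          have := hinj n' (by omega) (n' + 1 + 1) (by omega) h2
          omega
    · rcases hstep n (by omega) with hlast | hlast
      · cases n with
        | zero =>
          left
          intro j hj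
          have hj0 : j = 0 := by omega
          subst hj0; exact hlast
        | succ n' =>
          exfalso
          have hstepdown := hdown n' (by omega)
          have h2 : f n' = f (n' + 1 + 1) := by omega
          have := hinj n' (by omega) (n' + 1 + 1) (by omega) h2
          omega
      · right
        intro j hj
        rcases Nat.lt_or_ge j n with hcase | hcase
        · exact hdown j hcase
        · have hjn : j = n := by omega
          subst hjn; exact hlast

lemma steps_all_up (f : ℕ → ℕ) (m : ℕ)
    (hstep : ∀ j < m, f (j+1) = f j + 1 ∨ f j = f (j+1) + 1)
    (hinj : ∀ j ≤ m, ∀ k ≤ m, f j = f k → j = k)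
    (hlt : f 0 < f m) : ∀ j ≤ m, f j = f 0 + j := by
  rcases steps_dichotomy f m hstep hinj with hup | hdown
  · intro j hj
    induction j with
    | zero => rfl
    | succ n ihn =>
      have h1 := hup n (by omega)
      have h2 := ihn (by omega)
      omega
  · exfalso
    have key : ∀ j, j ≤ m → f j + j = f 0 := by
      intro j
      induction j with
      | zero => intro _; rfl
      | succ n ihn =>
        intro hj
        have h1 := hdown n (by omega)
        have h2 := ihn (by omega)
        omega
    have := key m (le_refl m)
    omega


lemma region_edges_eq {H : SimpleGraph V} {xi wi : V}
    (Q : G.Walk xi wi) (hQ : Q.IsPath) (B : Set V) (d : V)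
    {a b : V} (p : H.Walk a b) (hp : p.IsPath) (hlen : 0 < p.length)
    (hedges : ∀ e ∈ p.edges, e ∈ Q.edges)
    (hint : ∀ z ∈ p.support, z ≠ a → z ≠ b → z ∉ B) (hb : b ∈ B)
    (hab : Q.support.idxOf a < Q.support.idxOf b) :
    {e | e ∈ p.edges} =
      {e | ∃ k, Q.support.idxOf a ≤ k ∧
        k < sInf {k' | Q.support.idxOf a < k' ∧ Q.support.getD k' d ∈ B} ∧
        e = s(Q.support.getD k d, Q.support.getD (k+1) d)} := by
  classical
  have hLnd : Q.support.Nodup := hQ.support_nodup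
  have hret : ∀ z ∈ Q.support, Q.support.getD (Q.support.idxOf z) d = z := by
    intro z hz
    rw [List.getD_eq_getElem _ d (List.idxOf_lt_length_iff.mpr hz)]
    exact List.getElem_idxOf _
  have hidx_getD : ∀ k, ∀ _ : k < Q.support.length, Q.support.idxOf (Q.support.getD k d) = k := by
    intro k hk
    rw [List.getD_eq_getElem _ d hk]
    exact List.Nodup.idxOf_getElem hLnd k hk
  have hmemL : ∀ z ∈ p.support, z ∈ Q.support := by
    intro z hz
    obtain ⟨e, he, hze⟩ := mem_edge_of_mem_support p hlen z hz
    exact mem_support_of_mem_edge Q (hedges e he) hze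
  set m := p.length with hm
  have hpslen : p.support.length = m + 1 := p.length_support
  set f : ℕ → ℕ := fun j => Q.support.idxOf (p.support.getD j d) with hf
  have hps_mem : ∀ j ≤ m, p.support.getD j d ∈ p.support := by
    intro j hj
    rw [List.getD_eq_getElem _ d (by omega : j < p.support.length)]
    exact List.getElem_mem _
  have hstep : ∀ j < m, f (j+1) = f j + 1 ∨ f j = f (j+1) + 1 := by
    intro j hj
    have hje : s(p.support.getD j d, p.support.getD (j+1) d) ∈ p.edges :=
      edge_getD_mem p d j (by omega)
    obtain ⟨k, hk, hke⟩ := edge_eq_getD Q d (hedges _ hje)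
    rw [Sym2.eq_iff] at hke
    rcases hke with ⟨h1, h2⟩ | ⟨h1, h2⟩
    · left
      simp only [hf, h1, h2]
      rw [hidx_getD k (by omega), hidx_getD (k+1) hk]
    · right
      simp only [hf, h1, h2]
      rw [hidx_getD k (by omega), hidx_getD (k+1) hk]
  have hinjf : ∀ j ≤ m, ∀ k ≤ m, f j = f k → j = k := by
    intro j hj k hk hfe
    have h1 : p.support.getD j d = p.support.getD k d := by
      calc p.support.getD j d
          = Q.support.getD (f j) d := (hret _ (hmemL _ (hps_mem j hj))).symm
        _ = Q.support.getD (f k) d := by rw [hfe]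
        _ = p.support.getD k d := hret _ (hmemL _ (hps_mem k hk))
    rw [List.getD_eq_getElem _ d (by omega : j < p.support.length),
      List.getD_eq_getElem _ d (by omega : k < p.support.length)] at h1
    exact hp.support_nodup.getElem_inj_iff.mp h1
  have hps0 : p.support.getD 0 d = a := by rw [p.support_eq_cons]; rfl
  have hpsm : p.support.getD m d = b := by
    have h1 : p.support.getLast (by simp) = b := p.getLast_support
    rw [List.getLast_eq_getElem] at h1
    rw [List.getD_eq_getElem _ d (by omega : m < p.support.length)]
    simp only [hpslen, Nat.add_sub_cancel] at h1
    exact h1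
  have hf0 : f 0 = Q.support.idxOf a := by simp only [hf, hps0]
  have hfm : f m = Q.support.idxOf b := by simp only [hf, hpsm]
  have hmono := steps_all_up f m hstep hinjf (by rw [hf0, hfm]; exact hab)
  have hm_eq : Q.support.idxOf b = Q.support.idxOf a + m := by
    have := hmono m le_rfl
    rw [hf0, hfm] at this
    exact this
  have hps_eq : ∀ j ≤ m, p.support.getD j d = Q.support.getD (Q.support.idxOf a + j) d := by
    intro j hj
    have h1 : f j = Q.support.idxOf a + j := by rw [← hf0]; exact hmono j hj
    calc p.support.getD j d
        = Q.support.getD (f j) d := (hret _ (hmemL _ (hps_mem j hj))).symm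
      _ = Q.support.getD (Q.support.idxOf a + j) d := by rw [h1]
  have hbT : Q.support.idxOf b ∈
      {k' | Q.support.idxOf a < k' ∧ Q.support.getD k' d ∈ B} := by
    refine ⟨hab, ?_⟩
    rw [hret b (hmemL b p.end_mem_support)]
    exact hb
  have hNb : sInf {k' | Q.support.idxOf a < k' ∧ Q.support.getD k' d ∈ B}
      = Q.support.idxOf b := by
    refine le_antisymm (Nat.sInf_le hbT) ?_
    by_contra hcon
    push_neg at hcon
    obtain ⟨hgt, hBk⟩ := Nat.sInf_mem (⟨_, hbT⟩ :
      {k' | Q.support.idxOf a < k' ∧ Q.support.getD k' d ∈ B}.Nonempty)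
    set k := sInf {k' | Q.support.idxOf a < k' ∧ Q.support.getD k' d ∈ B} with hk
    have hk2 : k < Q.support.idxOf a + m := by omega
    have hj1 : 0 < k - Q.support.idxOf a := by omega
    have hj2 : k - Q.support.idxOf a < m := by omega
    have hkj : Q.support.getD k d = p.support.getD (k - Q.support.idxOf a) d := by
      rw [hps_eq _ (by omega)]
      congr 1
      omega
    refine hint (p.support.getD (k - Q.support.idxOf a) d)
      (hps_mem _ (by omega)) ?_ ?_ (hkj ▸ hBk)
    · intro hzz
      have : f (k - Q.support.idxOf a) = f 0 := by
        simp only [hf, hzz, hps0]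
      have := hinjf _ (by omega) 0 (by omega) this
      omega
    · intro hzz
      have : f (k - Q.support.idxOf a) = f m := by
        simp only [hf, hzz, hpsm]
      have := hinjf _ (by omega) m le_rfl this
      omega
  ext e
  simp only [Set.mem_setOf_eq]
  constructor
  · intro he
    obtain ⟨j, hj, hje⟩ := edge_eq_getD p d he
    rw [hpslen] at hj
    refine ⟨Q.support.idxOf a + j, by omega, ?_, ?_⟩
    · rw [hNb, hm_eq]; omega
    · rw [hje, hps_eq j (by omega), hps_eq (j+1) (by omega)]
      exact rfl
  · rintro ⟨k, hk1, hk2, rfl⟩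
    rw [hNb, hm_eq] at hk2
    have hje := edge_getD_mem p d (k - Q.support.idxOf a) (by omega)
    have e1 : p.support.getD (k - Q.support.idxOf a) d = Q.support.getD k d := by
      rw [hps_eq _ (by omega)]; congr 1; omega
    have e2 : p.support.getD (k - Q.support.idxOf a + 1) d = Q.support.getD (k+1) d := by
      rw [hps_eq _ (by omega)]; congr 1; omega
    rw [e1, e2] at hje
    exact hje


theorem main_aux {V : Type*} [Fintype V] [DecidableEq V] {G : SimpleGraph V} {t : ℕ}
    (x w : Fin t → V) (P : ∀ i : Fin t, G.Walk (x i) (w i)) (hPp : ∀ i, (P i).IsPath)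
    (hkey : ∀ i j : Fin t, j < i → ∀ u, u ∈ (P j).support → u ∈ (P i).support → u = w i) :
    {E : Set (Sym2 V) | ∃ (u v : V),
        u ∈ (Set.range x ∪ Set.range w) ∧ v ∈ (Set.range x ∪ Set.range w) ∧
        ∃ p : (SimpleGraph.fromEdgeSet {e | ∃ i, e ∈ (P i).edges}).Walk u v,
          p.IsPath ∧ 0 < p.length ∧
          (∀ z ∈ p.support, z ≠ u → z ≠ v → z ∉ (Set.range x ∪ Set.range w)) ∧
          {e | e ∈ p.edges} = E}.ncard ≤ 2 * t := by
  classical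
  set B : Set V := Set.range x ∪ Set.range w with hB
  have huniq : ∀ u, u ∉ B → ∀ i j : Fin t, u ∈ (P i).support → u ∈ (P j).support → i = j := by
    intro u hu i j hi hj
    by_contra hne
    rcases lt_or_gt_of_ne hne with h | h
    · exact hu (Or.inr ⟨j, (hkey j i h u hi hj).symm⟩)
    · exact hu (Or.inr ⟨i, (hkey i j h u hj hi).symm⟩)
  -- all edges of a region path lie in a single P i
  have hsame : ∀ (u v : V) (p : (SimpleGraph.fromEdgeSet {e | ∃ i, e ∈ (P i).edges}).Walk u v),
      p.IsPath → 0 < p.length → (∀ z ∈ p.support, z ≠ u → z ≠ v → z ∉ B) →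
      ∃ i, ∀ e ∈ p.edges, e ∈ (P i).edges := by
    intro u v p
    induction p with
    | nil => intro _ h0 _; simp at h0
    | @cons u u' v h q ih =>
      intro hp h0 hint
      have hq : q.IsPath := ((Walk.cons_isPath_iff h q).mp hp).1
      have hu_not : u ∉ q.support := ((Walk.cons_isPath_iff h q).mp hp).2
      obtain ⟨i0, hi0⟩ : ∃ i, s(u, u') ∈ (P i).edges :=
        ((SimpleGraph.fromEdgeSet_adj _).mp h).1
      cases q with
      | nil =>
        refine ⟨i0, ?_⟩
        intro e he
        simp only [Walk.edges_cons, Walk.edges_nil, List.mem_singleton] at he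
        rw [he]
        exact hi0
      | @cons u'2 u'' v2 h' q' =>
        have hu'B : u' ∉ B := by
          refine hint u' (by simp [Walk.support_cons]) ?_ ?_
          · intro hh
            exact hu_not (hh ▸ Walk.start_mem_support _)
          · intro hh
            exact ((Walk.cons_isPath_iff h' q').mp hq).2 (hh ▸ Walk.end_mem_support q')
        obtain ⟨i, hi⟩ : ∃ i, ∀ e ∈ (Walk.cons h' q').edges, e ∈ (P i).edges := by
          refine ih hq (by simp) ?_
          intro z hz hz1 hz2
          refine hint z (by simp [Walk.support_cons]; right; simpa using hz) ?_ hz2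
          intro hzu
          exact hu_not (hzu ▸ hz)
        have hu'1 : u' ∈ (P i).support := by
          have hmem : s(u', u'') ∈ (Walk.cons h' q').edges := by
            simp [Walk.edges_cons]
          exact mem_support_of_mem_edge _ (hi _ hmem) (by simp)
        have hu'2 : u' ∈ (P i0).support := mem_support_of_mem_edge _ hi0 (by simp)
        have hii : i0 = i := huniq u' hu'B i0 i hu'2 hu'1
        subst hii
        refine ⟨i0, ?_⟩
        intro e he
        rw [Walk.edges_cons, List.mem_cons] at he
        rcases he with rfl | he
        · exact hi0
        · exact hi e he
  -- retrieval helpers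
  have hret : ∀ (i : Fin t) (dd : V), ∀ z ∈ (P i).support,
      (P i).support.getD ((P i).support.idxOf z) dd = z := by
    intro i dd z hz
    rw [List.getD_eq_getElem _ dd (List.idxOf_lt_length_iff.mpr hz)]
    exact List.getElem_idxOf _
  -- the canonical region description
  set g : Fin t × V → Set (Sym2 V) := fun q =>
    {e | ∃ k, (P q.1).support.idxOf q.2 ≤ k ∧
      k < sInf {k' | (P q.1).support.idxOf q.2 < k' ∧ (P q.1).support.getD k' (x q.1) ∈ B} ∧
      e = s((P q.1).support.getD k (x q.1), (P q.1).support.getD (k+1) (x q.1))} with hg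
  set S : Set (Fin t × V) := {q | q.2 = x q.1 ∨
    (q.2 ∈ Set.range w ∧ q.2 ∈ (P q.1).support ∧ q.2 ≠ w q.1)} with hS
  have hcover : {E : Set (Sym2 V) | ∃ (u v : V),
      u ∈ B ∧ v ∈ B ∧
      ∃ p : (SimpleGraph.fromEdgeSet {e | ∃ i, e ∈ (P i).edges}).Walk u v,
        p.IsPath ∧ 0 < p.length ∧
        (∀ z ∈ p.support, z ≠ u → z ≠ v → z ∉ B) ∧
        {e | e ∈ p.edges} = E} ⊆ g '' S := by
    rintro E ⟨u, v, hu, hv, p, hp, hlen, hint, hE⟩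
    obtain ⟨i, hi⟩ := hsame u v p hp hlen hint
    have hus : u ∈ (P i).support := by
      obtain ⟨e, he, hue⟩ := mem_edge_of_mem_support p hlen u p.start_mem_support
      exact mem_support_of_mem_edge _ (hi e he) hue
    have hvs : v ∈ (P i).support := by
      obtain ⟨e, he, hve⟩ := mem_edge_of_mem_support p hlen v p.end_mem_support
      exact mem_support_of_mem_edge _ (hi e he) hve
    have huv : u ≠ v := by
      intro hh
      subst hh
      rw [Walk.isPath_iff_eq_nil] at hp
      rw [hp] at hlen
      simp at hlen
    have hidxne : (P i).support.idxOf u ≠ (P i).support.idxOf v := by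
      intro hh
      apply huv
      calc u = (P i).support.getD ((P i).support.idxOf u) (x i) := (hret i (x i) u hus).symm
        _ = (P i).support.getD ((P i).support.idxOf v) (x i) := by rw [hh]
        _ = v := hret i (x i) v hvs
    -- the vertex `a` among u,v which comes first along P i, and `b` the other;
    -- a path `q` from a to b
    have main : ∀ (a b : V), a ∈ B → b ∈ B → a ∈ (P i).support → b ∈ (P i).support →
        (P i).support.idxOf a < (P i).support.idxOf b →
        ∀ q : (SimpleGraph.fromEdgeSet {e | ∃ i, e ∈ (P i).edges}).Walk a b,
        q.IsPath → 0 < q.length → (∀ e ∈ q.edges, e ∈ (P i).edges) →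
        (∀ z ∈ q.support, z ≠ a → z ≠ b → z ∉ B) →
        {e | e ∈ q.edges} = E → E ∈ g '' S := by
      intro a b ha hb has hbs hab q hq hqlen hqe hqint hqE
      have hEeq : E = g (i, a) := by
        rw [← hqE]
        exact region_edges_eq (P i) (hPp i) B (x i) q hq hqlen hqe hqint hb hab
      refine ⟨(i, a), ?_, hEeq.symm⟩
      -- a ≠ w i
      have hna : a ≠ w i := by
        intro hh
        have hwlast : (P i).support.idxOf (w i) = (P i).support.length - 1 := by
          have h1 : (P i).support.getLast (by simp) = w i := (P i).getLast_support
          rw [List.getLast_eq_getElem] at h1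
          have h2 := List.Nodup.idxOf_getElem (hPp i).support_nodup ((P i).support.length - 1)
            (by have := (P i).length_support; omega)
          rw [h1] at h2
          exact h2
        have hblt : (P i).support.idxOf b < (P i).support.length :=
          List.idxOf_lt_length_iff.mpr hbs
        rw [hh, hwlast] at hab
        omega
      rcases ha with ⟨k, hk⟩ | hwmem
      · by_cases hki : k = i
        · left
          simp only [← hk, hki]
        · right
          have hks : a ∈ (P k).support := hk ▸ Walk.start_mem_support (P k)
          refine ⟨?_, has, hna⟩
          rcases lt_or_gt_of_ne (fun hh : k = i => hki hh) with hlt | hgt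
          · exact absurd (hkey i k hlt a hks has) hna
          · exact ⟨k, (hkey k i hgt a has hks).symm⟩
      · right
        exact ⟨hwmem, has, hna⟩
    rcases Nat.lt_or_ge ((P i).support.idxOf u) ((P i).support.idxOf v) with hlt | hge
    · exact main u v hu hv hus hvs hlt p hp hlen hi hint hE
    · have hlt : (P i).support.idxOf v < (P i).support.idxOf u := by omega
      refine main v u hv hu hvs hus hlt p.reverse hp.reverse
        (by rw [Walk.length_reverse]; exact hlen) ?_ ?_ ?_
      · intro e he
        rw [Walk.edges_reverse, List.mem_reverse] at he
        exact hi e he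
      · intro z hz hz1 hz2
        rw [Walk.support_reverse, List.mem_reverse] at hz
        exact hint z hz hz2 hz1
      · rw [← hE]
        ext e
        simp [Walk.edges_reverse]
  -- counting
  calc ({E : Set (Sym2 V) | ∃ (u v : V),
      u ∈ B ∧ v ∈ B ∧
      ∃ p : (SimpleGraph.fromEdgeSet {e | ∃ i, e ∈ (P i).edges}).Walk u v,
        p.IsPath ∧ 0 < p.length ∧
        (∀ z ∈ p.support, z ≠ u → z ≠ v → z ∉ B) ∧
        {e | e ∈ p.edges} = E}).ncard
      ≤ (g '' S).ncard := Set.ncard_le_ncard hcover (Set.toFinite _)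
    _ ≤ S.ncard := Set.ncard_image_le (Set.toFinite S)
    _ ≤ ((fun i : Fin t => ((i, x i) : Fin t × V)) '' Set.univ).ncard +
        ({q : Fin t × V | q.2 ∈ Set.range w ∧ q.2 ∈ (P q.1).support ∧ q.2 ≠ w q.1}).ncard := by
      refine le_trans (Set.ncard_le_ncard ?_ (Set.toFinite _)) (Set.ncard_union_le _ _)
      rintro ⟨i, a⟩ (h | h)
      · left
        exact ⟨i, trivial, Prod.ext rfl h.symm⟩
      · right
        exact h
    _ ≤ 2 * t := by
      have h1 : ((fun i : Fin t => ((i, x i) : Fin t × V)) '' Set.univ).ncard ≤ t := by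
        refine le_trans (Set.ncard_image_le (Set.toFinite _)) ?_
        rw [Set.ncard_univ]
        simp
      have h2 : ({q : Fin t × V | q.2 ∈ Set.range w ∧ q.2 ∈ (P q.1).support ∧ q.2 ≠ w q.1}).ncard
          ≤ t := by
        have hinj : Set.InjOn Prod.snd
            {q : Fin t × V | q.2 ∈ Set.range w ∧ q.2 ∈ (P q.1).support ∧ q.2 ≠ w q.1} := by
          rintro ⟨i, a⟩ ⟨h1a, h2a, h3a⟩ ⟨j, b⟩ ⟨h1b, h2b, h3b⟩ hab
          simp only at hab
          subst hab
          by_contra hne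
          have hij : i ≠ j := fun hh => hne (by rw [hh])
          rcases lt_or_gt_of_ne hij with hlt | hgt
          · exact h3b (hkey j i hlt a h2a h2b)
          · exact h3a (hkey i j hgt a h2b h2a)
        refine le_trans (Set.ncard_le_ncard_of_injOn (t := Set.range w) Prod.snd ?_ hinj (Set.toFinite _)) ?_
        · rintro ⟨i, a⟩ ⟨h1a, _, _⟩
          exact h1a
        · rw [← Set.image_univ]
          refine le_trans (Set.ncard_image_le (Set.toFinite _)) ?_
          rw [Set.ncard_univ]
          simp
      omega


end KernelAux

/-- The kernel construction: an `(x,y)`-ordered family of detours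
`D 0 ≺ D 1 ≺ … ≺ D (t-1)`, all ending at the same vertex `y'` (a `y`-interleaved family),
such that any two detours agree on the subpath between any two common vertices (`hagree`:
suffixes from any common vertex coincide).  At step `i`, the prefix `(D i).takeUntil (w i)`
is added to the kernel, where `w i` is the first vertex of `D i` lying in the
already-built kernel `⋃_{j<i} (D j).takeUntil (w j)` (and `w 0 = y'`).  Then the number of
regions of the final kernel — maximal path-segments whose endpoints are marked points of
`B = range x ∪ range w` and whose interior avoids `B`, identified here with their edge
sets — is at most `2·t`. -/
theorem kernel_num_regions_le {V : Type*} [Fintype V] [DecidableEq V] (G : SimpleGraph V)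
    (t : ℕ) (y' : V) (x : Fin t → V)
    (D : (i : Fin t) → G.Walk (x i) y')
    (hDpath : ∀ i, (D i).IsPath)
    (hagree : ∀ i j : Fin t, ∀ (u : V) (hu : u ∈ (D i).support) (hu' : u ∈ (D j).support),
      (D i).dropUntil u hu = (D j).dropUntil u hu')
    (w : Fin t → V) (hw : ∀ i, w i ∈ (D i).support)
    (hw0 : ∀ i : Fin t, (i : ℕ) = 0 → w i = y')
    (hwin : ∀ i : Fin t, 0 < (i : ℕ) →
      ∃ j, j < i ∧ w i ∈ ((D j).takeUntil (w j) (hw j)).support)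
    (hfirst : ∀ i : Fin t, ∀ u ∈ ((D i).takeUntil (w i) (hw i)).support,
      (∃ j, j < i ∧ u ∈ ((D j).takeUntil (w j) (hw j)).support) → u = w i) :
    {E : Set (Sym2 V) | ∃ (u v : V),
        u ∈ (Set.range x ∪ Set.range w) ∧ v ∈ (Set.range x ∪ Set.range w) ∧
        ∃ p : (SimpleGraph.fromEdgeSet
            {e | ∃ i, e ∈ ((D i).takeUntil (w i) (hw i)).edges}).Walk u v,
          p.IsPath ∧ 0 < p.length ∧
          (∀ z ∈ p.support, z ≠ u → z ≠ v → z ∉ (Set.range x ∪ Set.range w)) ∧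
          {e | e ∈ p.edges} = E}.ncard ≤ 2 * t := by
  exact KernelAux.main_aux x w (fun i => (D i).takeUntil (w i) (hw i))
    (fun i => (hDpath i).takeUntil _)
    (fun i j hji u huj hui => hfirst i u hui ⟨j, hji, huj⟩)
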